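/- Being SIM is not partition regular: there exists a set A ⊆ ℕ such that neither A nor ℕ∖A has the SIM property, witnessed by the set consisting of successive blocks of m elements in and m elements out, with m increasing by 1 each time. -/

import Mathlib

open Filter Set MeasureTheory

/-- The hypernatural numbers: the ultrapower of `ℕ` by the hyperfilter. -/
abbrev SN : Type := Filter.Germ (Filter.hyperfilter ℕ : Filter ℕ) ℕ

/-- Membership of a hypernatural in the internal set determined by a sequence of sets. -/
def memF (F : ℕ → Set ℕ) (x : SN) : Prop :=
  x.liftOn (fun f => ∀ᶠ i in (Filter.hyperfilter ℕ : Filter ℕ), f i ∈ F i)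
    (by
      intro f g h
      exact propext (eventually_congr (h.mono fun i hi => by rw [hi])))

/-- A set of hypernaturals is internal if it is determined by a sequence of subsets of `ℕ`. -/
def InternalSet (A : Set SN) : Prop := ∃ F : ℕ → Set ℕ, A = {x | memF F x}

/-- The nonstandard extension `*A ⊆ *ℕ` of a set `A ⊆ ℕ`. -/
def starN (A : Set ℕ) : Set SN := {x | memF (fun _ => A) x}

/-- The canonical map from the hypernaturals to the hyperreals. -/
noncomputable def toR (x : SN) : Hyperreal := Filter.Germ.map (fun n : ℕ => (n : ℝ)) x

/-- `[y,z]` is an infinite (hyperfinite) interval. -/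
def InfInterval (y z : SN) : Prop := ∀ n : ℕ, y + (n : SN) < z

/-- The map `st_I : I → [0,1]`, `st_I(a) = st((a-y)/(z-y))`. -/
noncomputable def stI (y z : SN) (x : SN) : ℝ :=
  Hyperreal.st ((toR x - toR y) / (toR z - toR y))

/-- `λ_I(A)`: Lebesgue measure of the standard part image of `A ∩ I`, `I = [y,z]`. -/
noncomputable def lam (A : Set SN) (y z : SN) : ℝ :=
  (volume (stI y z '' (A ∩ Set.Icc y z))).toReal

/-- `g_A(I)`: the normalized length of the largest gap of `A` on `I = [y,z]`. -/
noncomputable def gap (A : Set SN) (y z : SN) : ℝ :=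
  sSup {r : ℝ | 0 ≤ r ∧ ∃ c d : SN, c ∈ Set.Icc y z ∧ d ∈ Set.Icc y z ∧ c ≤ d ∧
    Set.Icc c d ∩ A = ∅ ∧ (r : Hyperreal) ≤ (toR d - toR c) / (toR z - toR y)}

/-- `A` has the interval-measure (IM) property on `I = [y,z]`. -/
def IMOn (A : Set SN) (y z : SN) : Prop :=
  ∀ ε : ℝ, 0 < ε → ∃ δ : ℝ, 0 < δ ∧ ∀ c d : SN, y ≤ c → c ≤ d → d ≤ z →
    InfInterval c d → gap A c d ≤ δ → 1 - ε ≤ lam A c d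

/-- `A` has the enhanced IM property on `I = [y,z]`. -/
def EnhancedIMOn (A : Set SN) (y z : SN) : Prop := IMOn A y z ∧ 0 < lam A y z

/-- `A ⊆ ℕ` has the standard interval-measure (SIM) property. -/
def SIM (A : Set ℕ) : Prop :=
  (∀ y z : SN, InfInterval y z → IMOn (starN A) y z) ∧
  ∃ y z : SN, InfInterval y z ∧ EnhancedIMOn (starN A) y z

/-- `A ⊆ ℕ` is supra-SIM if it contains a SIM set. -/
def SupraSIM (A : Set ℕ) : Prop := ∃ B ⊆ A, SIM B

/-! ### Auxiliary material -/

local notation "U" => (Filter.hyperfilter ℕ : Filter ℕ)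

/-- Coercion of a real sequence to a hyperreal (germ). -/
noncomputable def HG (f : ℕ → ℝ) : ℝ* := Filter.Germ.ofFun f

namespace Stmt10Aux

/-- The witnessing set. -/
def Aset : Set ℕ := {n : ℕ | ∃ m : ℕ, m * m < n + m ∧ n ≤ m * m}

lemma exists_rep (x : SN) : ∃ f : ℕ → ℕ, x = ↑f := by
  obtain ⟨f, hf⟩ := Quotient.exists_rep x
  exact ⟨f, hf.symm⟩

lemma mem_starN {S : Set ℕ} {f : ℕ → ℕ} : (↑f : SN) ∈ starN S ↔ ∀ᶠ i in U, f i ∈ S := Iff.rfl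

lemma toR_coe (f : ℕ → ℕ) : toR ↑f = HG (fun i => (f i : ℝ)) := rfl

lemma coe_real (r : ℝ) : (r : ℝ*) = HG (fun _ => r) := rfl

lemma HG_le {f g : ℕ → ℝ} : HG f ≤ HG g ↔ ∀ᶠ i in U, f i ≤ g i := Filter.Germ.coe_le

lemma sn_le {f g : ℕ → ℕ} : (↑f : SN) ≤ ↑g ↔ ∀ᶠ i in U, f i ≤ g i := Filter.Germ.coe_le

lemma sn_lt {f g : ℕ → ℕ} : (↑f : SN) < ↑g ↔ ∀ᶠ i in U, f i < g i := Filter.Germ.coe_lt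

lemma ev_ge (n : ℕ) : ∀ᶠ i in U, n ≤ i :=
  (Nat.hyperfilter_le_atTop) (eventually_ge_atTop n)

/-- standard part of a hyperreal squeezed between two reals -/
lemma st_between {q : ℝ*} {u v : ℝ} (h1 : (u : ℝ*) ≤ q) (h2 : q ≤ (v : ℝ*)) :
    u ≤ q.st ∧ q.st ≤ v := by
  have hni : ¬ q.Infinite := by
    rintro (hp | hn)
    · have := lt_of_lt_of_le (hp (v + 1)) h2
      rw [Hyperreal.coe_lt_coe] at this
      linarith
    · have := lt_of_le_of_lt h1 (hn (u - 1))
      rw [Hyperreal.coe_lt_coe] at this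
      linarith
  constructor
  · have := Hyperreal.st_le_of_le (Hyperreal.isSt_refl_real u).not_infinite hni h1
    rwa [Hyperreal.st_id_real] at this
  · have := Hyperreal.st_le_of_le hni (Hyperreal.isSt_refl_real v).not_infinite h2
    rwa [Hyperreal.st_id_real] at this

/-! ### Arithmetic facts about `Aset` -/

lemma sq_mem_A {m : ℕ} (hm : 1 ≤ m) : m * m ∈ Aset :=
  ⟨m, by nlinarith, le_rfl⟩

lemma sq_succ_mem_compl {m : ℕ} (hm : 1 ≤ m) : m * m + 1 ∈ Asetᶜ := by
  rintro ⟨m', h1, h2⟩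
  have hm' : m + 1 ≤ m' := by nlinarith
  nlinarith

lemma nextA (n : ℕ) : ∃ a ∈ Aset, n ≤ a ∧ a ≤ n + 2 * Nat.sqrt n + 3 := by
  refine ⟨(Nat.sqrt n + 1) * (Nat.sqrt n + 1), sq_mem_A (by omega), ?_, ?_⟩
  · exact le_of_lt (Nat.lt_succ_sqrt n)
  · have := Nat.sqrt_le n
    nlinarith

lemma nextAc (n : ℕ) : ∃ a ∈ Asetᶜ, n ≤ a ∧ a ≤ n + 2 * Nat.sqrt n + 3 := by
  refine ⟨(Nat.sqrt n + 1) * (Nat.sqrt n + 1) + 1, sq_succ_mem_compl (by omega), ?_, ?_⟩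
  · exact le_of_lt (Nat.lt_succ_of_lt (Nat.lt_succ_sqrt n))
  · have := Nat.sqrt_le n
    nlinarith

lemma block_A {i K n : ℕ} (h1 : i * i ≤ n) (h2 : n ≤ (i + K) * (i + K)) (hn : n ∈ Aset) :
    ∃ j < K + 1, (i + j) * (i + j) < n + (i + j) ∧ n ≤ (i + j) * (i + j) := by
  obtain ⟨m, hm1, hm2⟩ := hn
  have hmi : i ≤ m := by nlinarith
  have hmK : m ≤ i + K := by nlinarith
  refine ⟨m - i, by omega, ?_, ?_⟩ <;> rw [Nat.add_sub_cancel' hmi] <;> assumption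

lemma block_Ac {i K n : ℕ} (hi : 1 ≤ i) (h1 : i * i ≤ n) (h2 : n ≤ (i + K) * (i + K))
    (hn : n ∈ Asetᶜ) :
    ∃ j < K, (i + j) * (i + j) < n ∧ n ≤ (i + j) * (i + j) + (i + j) := by
  set m := Nat.sqrt n with hm
  have hub : n < (m + 1) * (m + 1) := Nat.lt_succ_sqrt n
  have hlb : m * m ≤ n := Nat.sqrt_le n
  have hm1 : 1 ≤ m := by
    rcases Nat.eq_zero_or_pos m with h | h
    · exfalso; rw [h] at hub; have : n = 0 := by omega
      subst this
      have : i = 0 := by nlinarith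
      omega
    · exact h
  have hne : n ≠ m * m := by
    intro h; exact hn (by rw [h]; exact sq_mem_A hm1)
  have hgt : m * m < n := lt_of_le_of_ne hlb (Ne.symm hne)
  have hle : n ≤ m * m + m := by
    by_contra h
    push_neg at h
    exact hn ⟨m + 1, by nlinarith, by nlinarith⟩
  have hmi : i ≤ m := by nlinarith
  have hmK : m < i + K := by nlinarith
  refine ⟨m - i, by omega, ?_, ?_⟩ <;> rw [Nat.add_sub_cancel' hmi] <;> assumption

/-! ### The gap estimate -/

lemma gap_le (S : Set ℕ) (hnext : ∀ n, ∃ a ∈ S, n ≤ a ∧ a ≤ n + 2 * Nat.sqrt n + 3)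
    (K : ℕ) (hK : 1 ≤ K) :
    gap (starN S) (↑(fun i : ℕ => i * i) : SN) (↑(fun i : ℕ => (i + K) * (i + K)) : SN) ≤ 2 / K := by
  apply Real.sSup_le _ (by positivity)
  rintro r ⟨hr0, c', d', hc', hd', hcd', hempty, hle⟩
  obtain ⟨g, rfl⟩ := exists_rep c'
  obtain ⟨h, rfl⟩ := exists_rep d'
  classical
  choose a haS hga haub using fun i => hnext (g i)
  rcases le_or_gt (↑a : SN) (↑h : SN) with hah | hha
  · exfalso
    have hmem : (↑a : SN) ∈ Set.Icc (↑g : SN) ↑h ∩ starN S :=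
      ⟨⟨sn_le.mpr (Eventually.of_forall hga), hah⟩, mem_starN.mpr (Eventually.of_forall haS)⟩
    rw [hempty] at hmem
    exact hmem
  · -- for a.e. i, h i < a i
    have E1 : ∀ᶠ i in U, h i < a i := sn_lt.mp hha
    have E2 : ∀ᶠ i in U, g i ≤ h i := sn_le.mp hcd'
    have E3 : ∀ᶠ i in U, h i ≤ (i + K) * (i + K) := sn_le.mp hd'.2
    have E4 : ∀ᶠ i in U, 1 ≤ i := ev_ge 1
    have hle' : ∀ᶠ i in U,
        r ≤ (((h i : ℕ) : ℝ) - ((g i : ℕ) : ℝ)) /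
          ((((i + K) * (i + K) : ℕ) : ℝ) - (((i * i : ℕ)) : ℝ)) := HG_le.mp hle
    obtain ⟨i, hi1, hi2, hi3, hi4, hi5⟩ := (E1.and (E2.and (E3.and (E4.and hle')))).exists
    -- numeric bounding
    have hsq : Nat.sqrt (g i) ≤ i + K := by
      calc Nat.sqrt (g i) ≤ Nat.sqrt ((i + K) * (i + K)) :=
            Nat.sqrt_le_sqrt (le_trans hi2 hi3)
        _ = i + K := Nat.sqrt_eq (i + K)
    have hhg : h i ≤ g i + 2 * (i + K) + 2 := by
      have := haub i
      have := hi1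
      omega
    have hK0 : (0 : ℝ) < (K : ℝ) := by exact_mod_cast hK
    have hi0 : (1 : ℝ) ≤ (i : ℝ) := by exact_mod_cast hi4
    have hD : (0 : ℝ) < (((i + K) * (i + K) : ℕ) : ℝ) - ((i * i : ℕ) : ℝ) := by
      push_cast
      nlinarith
    have hnum : ((h i : ℝ) - (g i : ℝ)) ≤ 2 * ((i : ℝ) + K) + 2 := by
      have : (h i : ℝ) ≤ (g i : ℝ) + 2 * ((i : ℝ) + K) + 2 := by exact_mod_cast hhg
      linarith
    have hgh : ((g i : ℝ)) ≤ (h i : ℝ) := by exact_mod_cast hi2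
    have hfrac : (((h i : ℕ) : ℝ) - ((g i : ℕ) : ℝ)) /
        ((((i + K) * (i + K) : ℕ) : ℝ) - ((i * i : ℕ) : ℝ)) ≤ 2 / K := by
      rw [div_le_div_iff₀ hD hK0]
      push_cast
      push_cast at hnum hgh
      nlinarith
    exact le_trans hi5 hfrac

/-! ### The measure estimate -/

lemma lam_le_aux (S : Set ℕ) (K N : ℕ) (hK : 1 ≤ K) (P : ℕ → ℕ → ℕ → Prop)
    (a : ℕ → ℝ) (w : ℝ) (hw : 0 ≤ w)
    (hcov : ∀ᶠ i in U, ∀ n, i * i ≤ n → n ≤ (i + K) * (i + K) → n ∈ S → ∃ j < N, P j i n)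
    (hbound : ∀ j, j < N → ∀ᶠ i in U, ∀ n : ℕ, P j i n →
      a j ≤ (((n : ℕ) : ℝ) - ((i * i : ℕ) : ℝ)) /
          ((((i + K) * (i + K) : ℕ) : ℝ) - ((i * i : ℕ) : ℝ)) ∧
      (((n : ℕ) : ℝ) - ((i * i : ℕ) : ℝ)) /
          ((((i + K) * (i + K) : ℕ) : ℝ) - ((i * i : ℕ) : ℝ)) ≤ a j + w) :
    lam (starN S) (↑(fun i : ℕ => i * i) : SN) (↑(fun i : ℕ => (i + K) * (i + K)) : SN) ≤ N * w := by
  set c : SN := ↑(fun i : ℕ => i * i)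
  set d : SN := ↑(fun i : ℕ => (i + K) * (i + K))
  have hsub : stI c d '' (starN S ∩ Set.Icc c d) ⊆
      ⋃ j ∈ Finset.range N, Set.Icc (a j) (a j + w) := by
    rintro t ⟨x, ⟨hxS, hxI⟩, rfl⟩
    obtain ⟨f, rfl⟩ := exists_rep x
    have h1 : ∀ᶠ i in U, i * i ≤ f i := sn_le.mp hxI.1
    have h2 : ∀ᶠ i in U, f i ≤ (i + K) * (i + K) := sn_le.mp hxI.2
    have hS : ∀ᶠ i in U, f i ∈ S := mem_starN.mp hxS
    have hall : ∀ᶠ i in U, ∃ j < N, P j i (f i) := by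
      filter_upwards [h1, h2, hS, hcov] with i hi1 hi2 hiS hic
      exact hic (f i) hi1 hi2 hiS
    have hU2 : (⋃ j ∈ Set.Iio N, {i | P j i (f i)}) ∈ U := by
      refine mem_of_superset hall ?_
      intro i hi
      obtain ⟨j, hj, hP⟩ := hi
      exact Set.mem_biUnion hj hP
    obtain ⟨j, hjN, hPj⟩ := (Ultrafilter.finite_biUnion_mem_iff (Set.finite_Iio N)).mp hU2
    have hPj' : ∀ᶠ i in U, P j i (f i) := hPj
    have hq : ∀ᶠ i in U,
        a j ≤ (((f i : ℕ) : ℝ) - ((i * i : ℕ) : ℝ)) /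
            ((((i + K) * (i + K) : ℕ) : ℝ) - ((i * i : ℕ) : ℝ)) ∧
        (((f i : ℕ) : ℝ) - ((i * i : ℕ) : ℝ)) /
            ((((i + K) * (i + K) : ℕ) : ℝ) - ((i * i : ℕ) : ℝ)) ≤ a j + w := by
      filter_upwards [hPj', hbound j hjN] with i hP hb
      exact hb (f i) hP
    have hlow : ((a j : ℝ) : ℝ*) ≤ (toR ↑f - toR c) / (toR d - toR c) :=
      HG_le.mpr (hq.mono fun i hi => hi.1)
    have hhigh : (toR ↑f - toR c) / (toR d - toR c) ≤ ((a j + w : ℝ) : ℝ*) :=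
      HG_le.mpr (hq.mono fun i hi => hi.2)
    have hst := st_between hlow hhigh
    refine Set.mem_biUnion (Finset.mem_range.mpr hjN) ?_
    exact ⟨hst.1, hst.2⟩
  have hvol : volume (stI c d '' (starN S ∩ Set.Icc c d)) ≤ ENNReal.ofReal (N * w) := by
    refine le_trans (measure_mono hsub) ?_
    refine le_trans (measure_biUnion_finset_le _ _) ?_
    have heq : ∀ j ∈ Finset.range N, volume (Set.Icc (a j) (a j + w)) = ENNReal.ofReal w := by
      intro j _
      rw [Real.volume_Icc]
      congr 1
      ring
    rw [Finset.sum_congr rfl heq, Finset.sum_const, Finset.card_range, nsmul_eq_mul,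
      ENNReal.ofReal_mul (by positivity : (0:ℝ) ≤ (N : ℝ)), ENNReal.ofReal_natCast]
  exact ENNReal.toReal_le_of_le_ofReal (by positivity) hvol

/-! ### Assembly -/

lemma not_SIM_of (S : Set ℕ)
    (hnext : ∀ n, ∃ a ∈ S, n ≤ a ∧ a ≤ n + 2 * Nat.sqrt n + 3)
    (hlam : ∀ K : ℕ, 4 ≤ K →
      lam (starN S) (↑(fun i : ℕ => i * i) : SN) (↑(fun i : ℕ => (i + K) * (i + K)) : SN) ≤ 25 / 32) :
    ¬ SIM S := by
  rintro ⟨hS, -⟩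
  set y : SN := ↑(fun i : ℕ => i * i) with hy
  set z : SN := ↑(fun i : ℕ => i * i * i) with hz
  have hyz : InfInterval y z := by
    intro n
    have : y + (n : SN) = ↑(fun i => i * i + n) := rfl
    rw [this, hz, sn_lt]
    filter_upwards [ev_ge (n + 2)] with i hi
    nlinarith
  obtain ⟨δ, hδ, himp⟩ := hS y z hyz (1/5) (by norm_num)
  set K : ℕ := max 4 (Nat.ceil (2/δ)) with hKdef
  have hK4 : 4 ≤ K := le_max_left _ _
  have hK1 : 1 ≤ K := by omega
  set d : SN := ↑(fun i : ℕ => (i + K) * (i + K)) with hd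
  have hyd : y ≤ d := by
    rw [hy, hd, sn_le]
    filter_upwards with i
    exact Nat.mul_le_mul (Nat.le_add_right _ _) (Nat.le_add_right _ _)
  have hdz : d ≤ z := by
    rw [hd, hz, sn_le]
    filter_upwards [ev_ge (K + 4)] with i hi
    have hKi : K ≤ i := by omega
    have h4i : 4 ≤ i := by omega
    nlinarith
  have hinf : InfInterval y d := by
    intro n
    have : y + (n : SN) = ↑(fun i => i * i + n) := rfl
    rw [this, hd, sn_lt]
    filter_upwards [ev_ge (n + 1)] with i hi
    nlinarith
  have hKR : (0 : ℝ) < (K : ℝ) := by exact_mod_cast hK1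
  have h2K : 2 / (K : ℝ) ≤ δ := by
    have hceil : 2/δ ≤ (K : ℝ) := by
      calc 2/δ ≤ (Nat.ceil (2/δ) : ℝ) := Nat.le_ceil _
        _ ≤ (K : ℝ) := by exact_mod_cast Nat.cast_le.mpr (le_max_right 4 _)
    rw [div_le_iff₀ hKR]
    rw [div_le_iff₀ hδ] at hceil
    linarith [mul_comm δ (K : ℝ)]
  have hgap : gap (starN S) y d ≤ δ := le_trans (gap_le S hnext K hK1) h2K
  have hge := himp y d le_rfl hyd hdz hinf hgap
  have hle := hlam K hK4
  rw [hy, hd] at hge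
  linarith

end Stmt10Aux


lemma ineqA1 (j K i n : ℝ) (hj0 : 0 ≤ j) (hjK : j ≤ K) (hK1 : 1 ≤ K)
    (hi : 8*(K+1)*(K+1) ≤ i)
    (hn1 : (i+j)*(i+j) < n + (i+j)) (hn2 : n ≤ (i+j)*(i+j)) :
    (8*j - 5) * ((i+K)*(i+K) - i*i) ≤ (n - i*i) * (8*K) := by
  nlinarith [mul_nonneg hj0 hj0, mul_nonneg (le_trans hj0 hjK) (sub_nonneg.mpr hjK),
    mul_nonneg hj0 (sub_nonneg.mpr hjK), sq_nonneg (j-1),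
    mul_nonneg (by linarith : (0:ℝ) ≤ K) (by nlinarith : (0:ℝ) ≤ 2*i - 8*j*K)]

lemma ineqA2 (j K i n : ℝ) (hj0 : 0 ≤ j) (hjK : j ≤ K) (hK1 : 1 ≤ K)
    (hi : 8*(K+1)*(K+1) ≤ i)
    (hn1 : (i+j)*(i+j) < n + (i+j)) (hn2 : n ≤ (i+j)*(i+j)) :
    (n - i*i) * (8*K) ≤ (8*j) * ((i+K)*(i+K) - i*i) := by
  nlinarith [mul_nonneg hj0 (sub_nonneg.mpr hjK),
    mul_nonneg (mul_nonneg hj0 hj0) (sub_nonneg.mpr hjK)]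

lemma ineqC1 (j K i n : ℝ) (hj0 : 0 ≤ j) (hjK : j + 1 ≤ K) (hK1 : 1 ≤ K)
    (hi : 8*(K+1)*(K+1) ≤ i)
    (hn1 : (i+j)*(i+j) < n) (hn2 : n ≤ (i+j)*(i+j) + (i+j)) :
    (8*j - 1) * ((i+K)*(i+K) - i*i) ≤ (n - i*i) * (8*K) := by
  nlinarith [mul_nonneg hj0 hj0, mul_nonneg hj0 (by linarith : 0 ≤ K - j),
    mul_nonneg (by linarith : (0:ℝ) ≤ K) (by nlinarith : (0:ℝ) ≤ 2*i - 8*j*K)]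

lemma ineqC2 (j K i n : ℝ) (hj0 : 0 ≤ j) (hjK : j + 1 ≤ K) (hK1 : 1 ≤ K)
    (hi : 8*(K+1)*(K+1) ≤ i)
    (hn1 : (i+j)*(i+j) < n) (hn2 : n ≤ (i+j)*(i+j) + (i+j)) :
    (n - i*i) * (8*K) ≤ (8*j + 5) * ((i+K)*(i+K) - i*i) := by
  nlinarith [mul_nonneg hj0 hj0, mul_nonneg hj0 (by linarith : 0 ≤ K - j),
    mul_nonneg (by linarith : (0:ℝ) ≤ K) (by nlinarith : (0:ℝ) ≤ 2*i - 8*j*j - 8*j)]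

open Stmt10Aux in
theorem stmt_10 :
    ∃ A : Set ℕ, A = {n : ℕ | ∃ m : ℕ, m * m < n + m ∧ n ≤ m * m} ∧ ¬ SIM A ∧ ¬ SIM Aᶜ := by
  refine ⟨Aset, rfl, ?_, ?_⟩
  · refine not_SIM_of Aset nextA ?_
    intro K hK4
    have hK1 : 1 ≤ K := by omega
    have hb : lam (starN Aset) (↑(fun i : ℕ => i * i) : SN) (↑(fun i : ℕ => (i + K) * (i + K)) : SN)
        ≤ ((K + 1 : ℕ) : ℝ) * (5 / (8 * (K : ℝ))) := by
      refine lam_le_aux Aset K (K + 1) hK1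
        (fun j i n => (i + j) * (i + j) < n + (i + j) ∧ n ≤ (i + j) * (i + j))
        (fun j => (8 * (j : ℝ) - 5) / (8 * (K : ℝ))) (5 / (8 * (K : ℝ))) (by positivity) ?_ ?_
      · filter_upwards with i
        intro n h1 h2 hn
        exact block_A h1 h2 hn
      · intro j hj
        filter_upwards [ev_ge (8 * (K + 1) * (K + 1))] with i hi
        rintro n ⟨hn1, hn2⟩
        have hjK : j ≤ K := by omega
        have hK0 : (0 : ℝ) < 8 * (K : ℝ) := by
          have : (0 : ℝ) < (K : ℝ) := by exact_mod_cast hK1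
          positivity
        have hi1 : (1 : ℝ) ≤ (i : ℝ) := by exact_mod_cast (le_trans (by nlinarith : 1 ≤ 8 * (K + 1) * (K + 1)) hi)
        have hKR : (1 : ℝ) ≤ (K : ℝ) := by exact_mod_cast hK1
        have hD : (0 : ℝ) < (((i + K) * (i + K) : ℕ) : ℝ) - ((i * i : ℕ) : ℝ) := by
          push_cast
          nlinarith
        have hjR : (j : ℝ) ≤ (K : ℝ) := by exact_mod_cast hjK
        have hj0 : (0 : ℝ) ≤ (j : ℝ) := by positivity
        have hiR : 8 * ((K : ℝ) + 1) * ((K : ℝ) + 1) ≤ (i : ℝ) := by exact_mod_cast hi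
        have hn1R : ((i : ℝ) + j) * ((i : ℝ) + j) < (n : ℝ) + ((i : ℝ) + j) := by
          exact_mod_cast hn1
        have hn2R : (n : ℝ) ≤ ((i : ℝ) + j) * ((i : ℝ) + j) := by exact_mod_cast hn2
        constructor
        · rw [div_le_div_iff₀ hK0 hD]
          push_cast
          linarith [ineqA1 (j : ℝ) (K : ℝ) (i : ℝ) (n : ℝ) hj0 hjR hKR hiR hn1R hn2R]
        · have heq : (8 * (j : ℝ) - 5) / (8 * (K : ℝ)) + 5 / (8 * (K : ℝ))
              = (8 * (j : ℝ)) / (8 * (K : ℝ)) := by ring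
          rw [heq, div_le_div_iff₀ hD hK0]
          push_cast
          linarith [ineqA2 (j : ℝ) (K : ℝ) (i : ℝ) (n : ℝ) hj0 hjR hKR hiR hn1R hn2R]
    refine le_trans hb ?_
    have hKR : (4 : ℝ) ≤ (K : ℝ) := by exact_mod_cast hK4
    have hK0 : (0 : ℝ) < (K : ℝ) := by linarith
    rw [show ((K + 1 : ℕ) : ℝ) = (K : ℝ) + 1 by push_cast; ring, ← mul_div_assoc,
      div_le_div_iff₀ (by positivity) (by norm_num : (0 : ℝ) < 32)]
    nlinarith
  · refine not_SIM_of Asetᶜ nextAc ?_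
    intro K hK4
    have hK1 : 1 ≤ K := by omega
    have hb : lam (starN Asetᶜ) (↑(fun i : ℕ => i * i) : SN)
        (↑(fun i : ℕ => (i + K) * (i + K)) : SN) ≤ (K : ℝ) * (6 / (8 * (K : ℝ))) := by
      refine lam_le_aux Asetᶜ K K hK1
        (fun j i n => (i + j) * (i + j) < n ∧ n ≤ (i + j) * (i + j) + (i + j))
        (fun j => (8 * (j : ℝ) - 1) / (8 * (K : ℝ))) (6 / (8 * (K : ℝ))) (by positivity) ?_ ?_
      · filter_upwards [ev_ge 1] with i hi
        intro n h1 h2 hn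
        exact block_Ac hi h1 h2 hn
      · intro j hj
        filter_upwards [ev_ge (8 * (K + 1) * (K + 1))] with i hi
        rintro n ⟨hn1, hn2⟩
        have hjK : j + 1 ≤ K := hj
        have hK0 : (0 : ℝ) < 8 * (K : ℝ) := by
          have : (0 : ℝ) < (K : ℝ) := by exact_mod_cast hK1
          positivity
        have hi1 : (1 : ℝ) ≤ (i : ℝ) := by exact_mod_cast (le_trans (by nlinarith : 1 ≤ 8 * (K + 1) * (K + 1)) hi)
        have hKR : (1 : ℝ) ≤ (K : ℝ) := by exact_mod_cast hK1
        have hD : (0 : ℝ) < (((i + K) * (i + K) : ℕ) : ℝ) - ((i * i : ℕ) : ℝ) := by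
          push_cast
          nlinarith
        have hjR : (j : ℝ) + 1 ≤ (K : ℝ) := by exact_mod_cast hjK
        have hj0 : (0 : ℝ) ≤ (j : ℝ) := by positivity
        have hiR : 8 * ((K : ℝ) + 1) * ((K : ℝ) + 1) ≤ (i : ℝ) := by exact_mod_cast hi
        have hn1R : ((i : ℝ) + j) * ((i : ℝ) + j) < (n : ℝ) := by exact_mod_cast hn1
        have hn2R : (n : ℝ) ≤ ((i : ℝ) + j) * ((i : ℝ) + j) + ((i : ℝ) + j) := by
          exact_mod_cast hn2
        constructor
        · rw [div_le_div_iff₀ hK0 hD]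
          push_cast
          linarith [ineqC1 (j : ℝ) (K : ℝ) (i : ℝ) (n : ℝ) hj0 hjR hKR hiR hn1R hn2R]
        · have heq : (8 * (j : ℝ) - 1) / (8 * (K : ℝ)) + 6 / (8 * (K : ℝ))
              = (8 * (j : ℝ) + 5) / (8 * (K : ℝ)) := by ring
          rw [heq, div_le_div_iff₀ hD hK0]
          push_cast
          linarith [ineqC2 (j : ℝ) (K : ℝ) (i : ℝ) (n : ℝ) hj0 hjR hKR hiR hn1R hn2R]
    refine le_trans hb ?_
    have hKR : (4 : ℝ) ≤ (K : ℝ) := by exact_mod_cast hK4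
    have hK0 : (0 : ℝ) < (K : ℝ) := by linarith
    rw [← mul_div_assoc, div_le_div_iff₀ (by positivity) (by norm_num : (0 : ℝ) < 32)]
    nlinarith
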